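/- Let V be a vector space over a field, W a subspace, and S(W) a subsemigroup of L(W) with I_W ∈ S(W). Let f ∈ L_{S(W)}(V). Then f is unit-regular in L_{S(W)}(V) if and only if (i) f↾W is unit-regular in S(W), (ii) R(f) ∩ W = R(f↾W), and (iii) codim(W + T_f) = codim(W + R(f)) for some subspace T_f of V such that T_f and W ∩ T_f are transversals of ker(f) and ker(f↾W), respectively. -/

import Mathlib

open Set

/-- `S` is a subsemigroup of `L(M)` (closed under composition). -/
def LIsSubsemigroup {K M : Type*} [Field K] [AddCommGroup M] [Module K M]
    (S : Set (M →ₗ[K] M)) : Prop :=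
  ∀ a ∈ S, ∀ b ∈ S, a ∘ₗ b ∈ S

/-- `S` is a subgroup of `Aut(M)`. -/
def LIsSubgroupOfAut {K M : Type*} [Field K] [AddCommGroup M] [Module K M]
    (S : Set (M →ₗ[K] M)) : Prop :=
  LIsSubsemigroup S ∧ (∀ a ∈ S, Function.Bijective a) ∧ (LinearMap.id ∈ S) ∧
    ∀ a ∈ S, ∃ b ∈ S, a ∘ₗ b = LinearMap.id ∧ b ∘ₗ a = LinearMap.id

/-- `S` is a regular semigroup of linear maps: `∀ a ∈ S, ∃ b ∈ S, aba = a`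
(composed left to right, i.e. `x ↦ a (b (a x))`). -/
def LIsRegularOn {K M : Type*} [Field K] [AddCommGroup M] [Module K M]
    (S : Set (M →ₗ[K] M)) : Prop :=
  ∀ a ∈ S, ∃ b ∈ S, a ∘ₗ b ∘ₗ a = a

/-- `S` is an inverse semigroup of linear maps. -/
def LIsInverseOn {K M : Type*} [Field K] [AddCommGroup M] [Module K M]
    (S : Set (M →ₗ[K] M)) : Prop :=
  ∀ a ∈ S, ∃! b, b ∈ S ∧ a ∘ₗ b ∘ₗ a = a ∧ b ∘ₗ a ∘ₗ b = b

/-- `u` is a unit of the linear monoid `S`. -/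
def LIsUnitOn {K M : Type*} [Field K] [AddCommGroup M] [Module K M]
    (S : Set (M →ₗ[K] M)) (u : M →ₗ[K] M) : Prop :=
  u ∈ S ∧ ∃ v ∈ S, u ∘ₗ v = LinearMap.id ∧ v ∘ₗ u = LinearMap.id

/-- `a` is a unit-regular element of `S`. -/
def LUnitRegularElem {K M : Type*} [Field K] [AddCommGroup M] [Module K M]
    (S : Set (M →ₗ[K] M)) (a : M →ₗ[K] M) : Prop :=
  ∃ u, LIsUnitOn S u ∧ a ∘ₗ u ∘ₗ a = a

/-- `S` is a unit-regular linear monoid. -/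
def LIsUnitRegularOn {K M : Type*} [Field K] [AddCommGroup M] [Module K M]
    (S : Set (M →ₗ[K] M)) : Prop :=
  ∀ a ∈ S, LUnitRegularElem S a

/-- `G` is a subgroup contained in the semigroup `S` of linear maps. -/
def LIsSubgroupIn {K M : Type*} [Field K] [AddCommGroup M] [Module K M]
    (S G : Set (M →ₗ[K] M)) : Prop :=
  G ⊆ S ∧ (∀ a ∈ G, ∀ b ∈ G, a ∘ₗ b ∈ G) ∧
    ∃ e ∈ G, (∀ a ∈ G, a ∘ₗ e = a ∧ e ∘ₗ a = a) ∧
      ∀ a ∈ G, ∃ b ∈ G, a ∘ₗ b = e ∧ b ∘ₗ a = e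

/-- `S` is a completely regular semigroup of linear maps: every element
belongs to a subgroup of `S`. -/
def LIsCompletelyRegularOn {K M : Type*} [Field K] [AddCommGroup M] [Module K M]
    (S : Set (M →ₗ[K] M)) : Prop :=
  ∀ a ∈ S, ∃ G, LIsSubgroupIn S G ∧ a ∈ G

/-- The semigroup `L_{S(W)}(V)` of all linear self-maps of `V` that leave `W`
invariant and whose restriction to `W` lies in `S`. -/
def LSemi {K V : Type*} [Field K] [AddCommGroup V] [Module K V] (W : Submodule K V)
    (S : Set (W →ₗ[K] W)) : Set (V →ₗ[K] V) :=
  {f | ∃ h : ∀ x ∈ W, f x ∈ W, f.restrict h ∈ S}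

section Aux
variable {K V : Type*} [Field K] [AddCommGroup V] [Module K V]

lemma aux_restrict_comp (W : Submodule K V) (f g : V →ₗ[K] V)
    (hf : ∀ x ∈ W, f x ∈ W) (hg : ∀ x ∈ W, g x ∈ W)
    (hfg : ∀ x ∈ W, (f ∘ₗ g) x ∈ W) :
    (f ∘ₗ g).restrict hfg = f.restrict hf ∘ₗ g.restrict hg := by
  ext x
  simp [LinearMap.restrict_apply]

lemma aux_isCompl_shift (W C D : Submodule K V) (hWC : Disjoint W C)
    (hD : IsCompl (W ⊔ C) D) : IsCompl W (C ⊔ D) := by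
  constructor
  · rw [Submodule.disjoint_def]
    intro x hxW hxCD
    obtain ⟨c, hc, d, hd, rfl⟩ := Submodule.mem_sup.mp hxCD
    have hdd : d ∈ (W ⊔ C) ⊓ D := ⟨by
      have : (c + d) - c ∈ W ⊔ C := Submodule.sub_mem _ (Submodule.mem_sup_left hxW)
        (Submodule.mem_sup_right hc)
      simpa using this, hd⟩
    rw [hD.disjoint.eq_bot] at hdd
    have hd0 : d = 0 := hdd
    subst hd0
    have : c + 0 ∈ W ⊓ C := ⟨hxW, by simpa using hc⟩
    rw [hWC.eq_bot] at this
    exact this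
  · rw [codisjoint_iff, ← sup_assoc]
    exact codisjoint_iff.mp hD.codisjoint

lemma aux_proj_eval (W Q : Submodule K V) (hc : IsCompl W Q) (w q : V)
    (hw : w ∈ W) (hq : q ∈ Q) :
    W.projectionOnto Q hc (w + q) = ⟨w, hw⟩ := by
  rw [map_add, Submodule.projectionOnto_apply_of_mem_right hc hq, add_zero]
  exact Submodule.projectionOnto_apply_left hc ⟨w, hw⟩

lemma aux_decomp (W C D : Submodule K V) (hD : IsCompl (W ⊔ C) D) (x : V) :
    ∃ w ∈ W, ∃ c ∈ C, ∃ d ∈ D, x = w + c + d := by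
  have hx : x ∈ (W ⊔ C) ⊔ D := by rw [codisjoint_iff.mp hD.codisjoint]; trivial
  obtain ⟨y, hy, d, hd, rfl⟩ := Submodule.mem_sup.mp hx
  obtain ⟨w, hw, c, hc, rfl⟩ := Submodule.mem_sup.mp hy
  exact ⟨w, hw, c, hc, d, hd, rfl⟩

end Aux


section Fwd
variable {K V : Type*} [Field K] [AddCommGroup V] [Module K V]

theorem fwd (W : Submodule K V) (S : Set (W →ₗ[K] W))
    (f : V →ₗ[K] V) (h : ∀ x ∈ W, f x ∈ W) (hf : f.restrict h ∈ S)
    (u : V →ₗ[K] V) (hu : ∀ x ∈ W, u x ∈ W) (huS : u.restrict hu ∈ S)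
    (v : V →ₗ[K] V) (hv : ∀ x ∈ W, v x ∈ W) (hvS : v.restrict hv ∈ S)
    (huv : u ∘ₗ v = LinearMap.id) (hvu : v ∘ₗ u = LinearMap.id)
    (hfuf : f ∘ₗ u ∘ₗ f = f) :
    (LUnitRegularElem S (f.restrict h) ∧
       LinearMap.range f ⊓ W = (LinearMap.range (f.restrict h)).map W.subtype ∧
       ∃ T : Submodule K V,
         (∀ x : V, ∃! y, y ∈ T ∧ f y = f x) ∧
         (∀ w ∈ W, ∃! y, y ∈ T ⊓ W ∧ f y = f w) ∧
         Module.rank K (V ⧸ (W ⊔ T)) =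
           Module.rank K (V ⧸ (W ⊔ LinearMap.range f))) := by
  have hfuf' : ∀ x, f (u (f x)) = f x := fun x => LinearMap.congr_fun hfuf x
  have huv' : ∀ x, u (v x) = x := fun x => LinearMap.congr_fun huv x
  have hvu' : ∀ x, v (u x) = x := fun x => LinearMap.congr_fun hvu x
  refine ⟨⟨u.restrict hu, ⟨huS, v.restrict hv, hvS, ?_, ?_⟩, ?_⟩, ?_, ?_⟩
  · ext x; exact huv' x
  · ext x; exact hvu' x
  · ext x
    exact hfuf' (x : V)
  · -- range condition
    apply le_antisymm
    · rintro x ⟨⟨y, rfl⟩, hxW⟩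
      refine ⟨(f.restrict h) ⟨u (f y), hu _ hxW⟩, ⟨_, rfl⟩, ?_⟩
      exact hfuf' y
    · rintro x ⟨z, ⟨w, rfl⟩, rfl⟩
      exact ⟨⟨(w : V), rfl⟩, ((f.restrict h) w).2⟩
  · -- transversal
    refine ⟨LinearMap.range (u ∘ₗ f), ?_, ?_, ?_⟩
    · intro x
      refine ⟨u (f x), ⟨⟨x, rfl⟩, hfuf' x⟩, ?_⟩
      rintro y ⟨⟨z, rfl⟩, hyz⟩
      simp only [LinearMap.comp_apply] at hyz ⊢
      have hz : f z = f x := (hfuf' z).symm.trans hyz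
      rw [hz]
    · intro w hw
      refine ⟨u (f w), ⟨⟨⟨w, rfl⟩, hu _ (h _ hw)⟩, hfuf' w⟩, ?_⟩
      rintro y ⟨⟨⟨z, rfl⟩, _⟩, hyz⟩
      simp only [LinearMap.comp_apply] at hyz ⊢
      have hz : f z = f w := (hfuf' z).symm.trans hyz
      rw [hz]
    · -- rank
      have hmap : Submodule.map (((LinearEquiv.ofLinear u v huv hvu : V ≃ₗ[K] V) : V →ₗ[K] V)) (W ⊔ LinearMap.range f)
          = W ⊔ LinearMap.range (u ∘ₗ f) := by
        rw [Submodule.map_sup]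
        congr 1
        · apply le_antisymm
          · rintro x ⟨y, hy, rfl⟩
            simpa only [LinearEquiv.coe_coe, LinearEquiv.ofLinear_apply] using hu _ hy
          · intro x hx
            exact ⟨v x, hv _ hx, by simp only [LinearEquiv.coe_coe, LinearEquiv.ofLinear_apply]; exact huv' x⟩
        · apply le_antisymm
          · rintro x ⟨y, ⟨z, rfl⟩, rfl⟩; exact ⟨z, rfl⟩
          · rintro x ⟨z, rfl⟩
            exact ⟨f z, ⟨z, rfl⟩, by simp only [LinearEquiv.coe_coe, LinearEquiv.ofLinear_apply]; rfl⟩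
      exact (Submodule.Quotient.equiv _ _ ((LinearEquiv.ofLinear u v huv hvu : V ≃ₗ[K] V)) hmap).symm.rank_eq
end Fwd

section Bwd
variable {K V : Type*} [Field K] [AddCommGroup V] [Module K V]

theorem bwd (W : Submodule K V) (S : Set (W →ₗ[K] W))
    (f : V →ₗ[K] V) (h : ∀ x ∈ W, f x ∈ W)
    (u₀ : W →ₗ[K] W) (hu₀S : u₀ ∈ S) (v₀ : W →ₗ[K] W) (hv₀S : v₀ ∈ S)
    (huv₀ : u₀ ∘ₗ v₀ = LinearMap.id) (hvu₀ : v₀ ∘ₗ u₀ = LinearMap.id)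
    (hreg : f.restrict h ∘ₗ u₀ ∘ₗ f.restrict h = f.restrict h)
    (hii : LinearMap.range f ⊓ W = (LinearMap.range (f.restrict h)).map W.subtype)
    (T : Submodule K V)
    (hT1 : ∀ x : V, ∃! y, y ∈ T ∧ f y = f x)
    (hT2 : ∀ w ∈ W, ∃! y, y ∈ T ⊓ W ∧ f y = f w)
    (hrank : Module.rank K (V ⧸ (W ⊔ T)) =
      Module.rank K (V ⧸ (W ⊔ LinearMap.range f))) :
    LUnitRegularElem (LSemi W S) f := by
  classical
  set R := LinearMap.range f with hRdef
  have hgex : ∀ x : V, ((hT1 x).choose ∈ T ∧ f (hT1 x).choose = f x) :=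
    fun x => (hT1 x).choose_spec.1
  have hguniq : ∀ x y, y ∈ T → f y = f x → y = (hT1 x).choose :=
    fun x y hy hfy => (hT1 x).choose_spec.2 y ⟨hy, hfy⟩
  let g : V →ₗ[K] V :=
  { toFun := fun x => (hT1 x).choose
    map_add' := fun x y => (hguniq (x + y) _ (T.add_mem (hgex x).1 (hgex y).1)
      (by rw [map_add, (hgex x).2, (hgex y).2, ← map_add])).symm
    map_smul' := fun c x => (hguniq (c • x) _ (T.smul_mem c (hgex x).1)
      (by rw [map_smul, (hgex x).2, ← map_smul])).symm }
  have hgT : ∀ x, g x ∈ T := fun x => (hgex x).1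
  have hfg : ∀ x, f (g x) = f x := fun x => (hgex x).2
  have hg_congr : ∀ x y, f x = f y → g x = g y := fun x y hxy =>
    hguniq y (g x) (hgT x) ((hfg x).trans hxy)
  have hgW : ∀ w ∈ W, g w ∈ W := by
    intro w hw
    obtain ⟨y, ⟨hyTW, hyf⟩, -⟩ := hT2 w hw
    have hyg : y = g w := hguniq w y hyTW.1 hyf
    rw [← hyg]; exact hyTW.2
  have hgTfix : ∀ t ∈ T, g t = t := fun t ht => (hguniq t t ht rfl).symm
  obtain ⟨s, hs⟩ := f.rangeRestrict.exists_rightInverse_of_surjective f.range_rangeRestrict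
  have hsf : ∀ r : R, f (s r) = (r : V) := by
    intro r
    have h1 := LinearMap.congr_fun hs r
    have h2 : (f.rangeRestrict (s r) : V) = ((LinearMap.id : R →ₗ[K] R) r : V) :=
      congrArg Subtype.val h1
    simpa using h2
  set G : R →ₗ[K] V := g ∘ₗ s with hGdef
  have hGf : ∀ r : R, f (G r) = (r : V) := fun r => (hfg (s r)).trans (hsf r)
  have hGT : ∀ r : R, G r ∈ T := fun r => hgT (s r)
  have hGW : ∀ r : R, (r : V) ∈ W → G r ∈ W := by
    intro r hrW
    have hmem : (r : V) ∈ R ⊓ W := ⟨r.2, hrW⟩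
    rw [hii] at hmem
    obtain ⟨z, ⟨w₁, rfl⟩, hz⟩ := hmem
    have hfw : f (w₁ : V) = (r : V) := hz
    have hgg : g (s r) = g (w₁ : V) := hg_congr _ _ (by rw [hsf r, hfw])
    have : G r = g (s r) := rfl
    rw [this, hgg]
    exact hgW _ w₁.2
  obtain ⟨C₀, hC₀⟩ := Submodule.exists_isCompl (W.comap R.subtype)
  set C : Submodule K V := C₀.map R.subtype with hCdef
  set GC : Submodule K V := C₀.map G with hGCdef
  have hCR : C ≤ R := Submodule.map_subtype_le _ _
  have hWC : Disjoint W C := by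
    rw [Submodule.disjoint_def]
    rintro x hxW ⟨y, hyC₀, rfl⟩
    have hy : y ∈ W.comap R.subtype ⊓ C₀ := ⟨hxW, hyC₀⟩
    rw [hC₀.disjoint.eq_bot] at hy
    have : y = 0 := hy
    rw [this]; rfl
  have hWCsup : W ⊔ C = W ⊔ R := by
    apply le_antisymm
    · exact sup_le le_sup_left (hCR.trans le_sup_right)
    · refine sup_le le_sup_left ?_
      intro x hxR
      have hx : (⟨x, hxR⟩ : R) ∈ W.comap R.subtype ⊔ C₀ := by
        rw [codisjoint_iff.mp hC₀.codisjoint]; trivial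
      obtain ⟨w₀, hw₀, c₀, hc₀, hsum⟩ := Submodule.mem_sup.mp hx
      have hxeq : (w₀ : V) + (c₀ : V) = x := congrArg Subtype.val hsum
      rw [← hxeq]
      exact Submodule.add_mem _ (Submodule.mem_sup_left hw₀)
        (Submodule.mem_sup_right ⟨c₀, hc₀, rfl⟩)
  have hWGC : Disjoint W GC := by
    rw [Submodule.disjoint_def]
    rintro x hxW ⟨y, hyC₀, rfl⟩
    have h1 : (y : V) ∈ W := by
      have h2 := h _ hxW
      rwa [hGf y] at h2
    have hy : y ∈ W.comap R.subtype ⊓ C₀ := ⟨h1, hyC₀⟩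
    rw [hC₀.disjoint.eq_bot] at hy
    have : y = 0 := hy
    rw [this, map_zero]
  have hGCT : GC ≤ T := by rintro x ⟨y, hy, rfl⟩; exact hGT y
  have hWGCsup : W ⊔ GC = W ⊔ T := by
    apply le_antisymm
    · exact sup_le le_sup_left (hGCT.trans le_sup_right)
    · refine sup_le le_sup_left ?_
      intro t ht
      have hftR : f t ∈ R := LinearMap.mem_range_self f t
      have hx : (⟨f t, hftR⟩ : R) ∈ W.comap R.subtype ⊔ C₀ := by
        rw [codisjoint_iff.mp hC₀.codisjoint]; trivial
      obtain ⟨w₀, hw₀, c₀, hc₀, hsum⟩ := Submodule.mem_sup.mp hx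
      have h1 : G ⟨f t, hftR⟩ = g t := hguniq t _ (hGT _) (hGf _)
      have h2 : g t = t := hgTfix t ht
      have h3 : G ⟨f t, hftR⟩ = G w₀ + G c₀ := by rw [← hsum, map_add]
      have h4 : t = G w₀ + G c₀ := by rw [← h3, h1, h2]
      rw [h4]
      exact Submodule.add_mem _ (Submodule.mem_sup_left (hGW w₀ hw₀))
        (Submodule.mem_sup_right ⟨c₀, hc₀, rfl⟩)
  obtain ⟨D, hD⟩ := Submodule.exists_isCompl (W ⊔ C)
  obtain ⟨D2, hD2⟩ := Submodule.exists_isCompl (W ⊔ GC)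
  have hrk : Module.rank K D = Module.rank K D2 := by
    calc Module.rank K D
        = Module.rank K (V ⧸ (W ⊔ C)) :=
          ((Submodule.quotientEquivOfIsCompl _ _ hD).rank_eq).symm
      _ = Module.rank K (V ⧸ (W ⊔ R)) := by rw [hWCsup]
      _ = Module.rank K (V ⧸ (W ⊔ T)) := hrank.symm
      _ = Module.rank K (V ⧸ (W ⊔ GC)) := by rw [hWGCsup]
      _ = Module.rank K D2 := (Submodule.quotientEquivOfIsCompl _ _ hD2).rank_eq
  obtain ⟨e₂⟩ := nonempty_linearEquiv_of_rank_eq hrk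
  have hW_CD : IsCompl W (C ⊔ D) := aux_isCompl_shift W C D hWC hD
  have hC_WD : IsCompl C (W ⊔ D) :=
    aux_isCompl_shift C W D hWC.symm (by rwa [sup_comm W C] at hD)
  have hW_GD : IsCompl W (GC ⊔ D2) := aux_isCompl_shift W GC D2 hWGC hD2
  have hGC_WD : IsCompl GC (W ⊔ D2) :=
    aux_isCompl_shift GC W D2 hWGC.symm (by rwa [sup_comm W GC] at hD2)
  set πW := W.linearProjOfIsCompl (C ⊔ D) hW_CD with hπW
  set πC := C.linearProjOfIsCompl (W ⊔ D) hC_WD with hπC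
  set πD := D.linearProjOfIsCompl (W ⊔ C) hD.symm with hπD
  set π2W := W.linearProjOfIsCompl (GC ⊔ D2) hW_GD with hπ2W
  set π2G := GC.linearProjOfIsCompl (W ⊔ D2) hGC_WD with hπ2G
  set π2D := D2.linearProjOfIsCompl (W ⊔ GC) hD2.symm with hπ2D
  have hπ : ∀ w c d (hw : w ∈ W) (hc : c ∈ C) (hd : d ∈ D),
      πW (w + c + d) = ⟨w, hw⟩ ∧ πC (w + c + d) = ⟨c, hc⟩ ∧ πD (w + c + d) = ⟨d, hd⟩ := by
    intro w c d hw hc hd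
    refine ⟨?_, ?_, ?_⟩
    · rw [add_assoc]
      exact aux_proj_eval W (C ⊔ D) hW_CD w (c + d) hw
        (Submodule.add_mem _ (Submodule.mem_sup_left hc) (Submodule.mem_sup_right hd))
    · rw [show w + c + d = c + (w + d) by abel]
      exact aux_proj_eval C (W ⊔ D) hC_WD c (w + d) hc
        (Submodule.add_mem _ (Submodule.mem_sup_left hw) (Submodule.mem_sup_right hd))
    · rw [show w + c + d = d + (w + c) by abel]
      exact aux_proj_eval D (W ⊔ C) hD.symm d (w + c) hd
        (Submodule.add_mem _ (Submodule.mem_sup_left hw) (Submodule.mem_sup_right hc))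
  have hπ2 : ∀ w z d (hw : w ∈ W) (hz : z ∈ GC) (hd : d ∈ D2),
      π2W (w + z + d) = ⟨w, hw⟩ ∧ π2G (w + z + d) = ⟨z, hz⟩ ∧ π2D (w + z + d) = ⟨d, hd⟩ := by
    intro w z d hw hz hd
    refine ⟨?_, ?_, ?_⟩
    · rw [add_assoc]
      exact aux_proj_eval W (GC ⊔ D2) hW_GD w (z + d) hw
        (Submodule.add_mem _ (Submodule.mem_sup_left hz) (Submodule.mem_sup_right hd))
    · rw [show w + z + d = z + (w + d) by abel]
      exact aux_proj_eval GC (W ⊔ D2) hGC_WD z (w + d) hz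
        (Submodule.add_mem _ (Submodule.mem_sup_left hw) (Submodule.mem_sup_right hd))
    · rw [show w + z + d = d + (w + z) by abel]
      exact aux_proj_eval D2 (W ⊔ GC) hD2.symm d (w + z) hd
        (Submodule.add_mem _ (Submodule.mem_sup_left hw) (Submodule.mem_sup_right hz))
  set uu : V →ₗ[K] V :=
    W.subtype ∘ₗ u₀ ∘ₗ πW + (G ∘ₗ Submodule.inclusion hCR) ∘ₗ πC
      + D2.subtype ∘ₗ e₂.toLinearMap ∘ₗ πD with huudef
  set vv : V →ₗ[K] V :=
    W.subtype ∘ₗ v₀ ∘ₗ π2W + (f ∘ₗ GC.subtype) ∘ₗ π2G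
      + D.subtype ∘ₗ e₂.symm.toLinearMap ∘ₗ π2D with hvvdef
  have huu_eval : ∀ w c d (hw : w ∈ W) (hc : c ∈ C) (hd : d ∈ D),
      uu (w + c + d) = (u₀ ⟨w, hw⟩ : V) + G (Submodule.inclusion hCR ⟨c, hc⟩)
        + (e₂ ⟨d, hd⟩ : V) := by
    intro w c d hw hc hd
    obtain ⟨h1, h2, h3⟩ := hπ w c d hw hc hd
    simp only [huudef, LinearMap.add_apply, LinearMap.comp_apply, h1, h2, h3]
    rfl
  have hvv_eval : ∀ w z d (hw : w ∈ W) (hz : z ∈ GC) (hd : d ∈ D2),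
      vv (w + z + d) = (v₀ ⟨w, hw⟩ : V) + f z + (e₂.symm ⟨d, hd⟩ : V) := by
    intro w z d hw hz hd
    obtain ⟨h1, h2, h3⟩ := hπ2 w z d hw hz hd
    simp only [hvvdef, LinearMap.add_apply, LinearMap.comp_apply, h1, h2, h3]
    rfl
  have hmemGC : ∀ (c : V) (hc : c ∈ C), G (Submodule.inclusion hCR ⟨c, hc⟩) ∈ GC := by
    intro c hc
    have hc' := hc
    obtain ⟨y, hy, hyc⟩ := hc'
    have hinc : Submodule.inclusion hCR (⟨c, hc⟩ : C) = y := Subtype.ext hyc.symm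
    rw [hinc]
    exact ⟨y, hy, rfl⟩
  have hfGC : ∀ z ∈ GC, f z ∈ C := by
    rintro z ⟨y, hy, rfl⟩
    rw [hGf y]
    exact ⟨y, hy, rfl⟩
  have hvu : ∀ x, vv (uu x) = x := by
    intro x
    obtain ⟨w, hw, c, hc, d, hd, rfl⟩ := aux_decomp W C D hD x
    rw [huu_eval w c d hw hc hd]
    have hw' : (u₀ ⟨w, hw⟩ : V) ∈ W := (u₀ ⟨w, hw⟩).2
    have hc' : G (Submodule.inclusion hCR ⟨c, hc⟩) ∈ GC := hmemGC c hc
    have hd' : (e₂ ⟨d, hd⟩ : V) ∈ D2 := (e₂ ⟨d, hd⟩).2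
    rw [hvv_eval _ _ _ hw' hc' hd']
    have e1 : (v₀ ⟨(u₀ ⟨w, hw⟩ : V), hw'⟩ : V) = w := by
      have hh : (⟨(u₀ ⟨w, hw⟩ : V), hw'⟩ : W) = u₀ ⟨w, hw⟩ := rfl
      rw [hh]
      exact congrArg Subtype.val (LinearMap.congr_fun hvu₀ ⟨w, hw⟩)
    have e2' : f (G (Submodule.inclusion hCR ⟨c, hc⟩)) = c := hGf _
    have e3 : (e₂.symm ⟨(e₂ ⟨d, hd⟩ : V), hd'⟩ : V) = d := by
      have hh : (⟨(e₂ ⟨d, hd⟩ : V), hd'⟩ : D2) = e₂ ⟨d, hd⟩ := rfl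
      rw [hh, LinearEquiv.symm_apply_apply]
    rw [e1, e2', e3]
  have huv : ∀ x, uu (vv x) = x := by
    intro x
    obtain ⟨w, hw, z, hz, d, hd, rfl⟩ := aux_decomp W GC D2 hD2 x
    rw [hvv_eval w z d hw hz hd]
    have hw' : (v₀ ⟨w, hw⟩ : V) ∈ W := (v₀ ⟨w, hw⟩).2
    have hc' : f z ∈ C := hfGC z hz
    have hd' : (e₂.symm ⟨d, hd⟩ : V) ∈ D := (e₂.symm ⟨d, hd⟩).2
    rw [huu_eval _ _ _ hw' hc' hd']
    have e1 : (u₀ ⟨(v₀ ⟨w, hw⟩ : V), hw'⟩ : V) = w := by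
      have hh : (⟨(v₀ ⟨w, hw⟩ : V), hw'⟩ : W) = v₀ ⟨w, hw⟩ := rfl
      rw [hh]
      exact congrArg Subtype.val (LinearMap.congr_fun huv₀ ⟨w, hw⟩)
    have e2' : G (Submodule.inclusion hCR ⟨f z, hc'⟩) = z := by
      obtain ⟨y, hy, rfl⟩ := hz
      have hinc : Submodule.inclusion hCR (⟨f (G y), hc'⟩ : C) = y :=
        Subtype.ext (hGf y)
      rw [hinc]
    have e3 : (e₂ ⟨(e₂.symm ⟨d, hd⟩ : V), hd'⟩ : V) = d := by
      have hh : (⟨(e₂.symm ⟨d, hd⟩ : V), hd'⟩ : D) = e₂.symm ⟨d, hd⟩ := rfl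
      rw [hh, LinearEquiv.apply_symm_apply]
    rw [e1, e2', e3]
  have hfuf : ∀ x, f (uu (f x)) = f x := by
    intro x
    have hfx : f x ∈ R := LinearMap.mem_range_self f x
    have hmem : (⟨f x, hfx⟩ : R) ∈ W.comap R.subtype ⊔ C₀ := by
      rw [codisjoint_iff.mp hC₀.codisjoint]; trivial
    obtain ⟨w₀, hw₀, c₀, hc₀, hsum⟩ := Submodule.mem_sup.mp hmem
    have hfx_eq : (w₀ : V) + (c₀ : V) = f x := congrArg Subtype.val hsum
    have hcC : (c₀ : V) ∈ C := ⟨c₀, hc₀, rfl⟩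
    have heval : uu (f x) = (u₀ ⟨(w₀ : V), hw₀⟩ : V)
        + G (Submodule.inclusion hCR ⟨(c₀ : V), hcC⟩) + (e₂ ⟨0, D.zero_mem⟩ : V) := by
      rw [show f x = (w₀ : V) + (c₀ : V) + 0 by rw [add_zero, hfx_eq]]
      exact huu_eval _ _ _ hw₀ hcC D.zero_mem
    have hz : (e₂ (⟨0, D.zero_mem⟩ : D) : V) = 0 := by
      have hh : (⟨0, D.zero_mem⟩ : D) = 0 := rfl
      rw [hh, map_zero]; rfl
    have hmid : f (G (Submodule.inclusion hCR ⟨(c₀ : V), hcC⟩)) = (c₀ : V) := hGf _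
    have hfst : f ((u₀ ⟨(w₀ : V), hw₀⟩ : W) : V) = (w₀ : V) := by
      have hmemW : (w₀ : V) ∈ R ⊓ W := ⟨w₀.2, hw₀⟩
      rw [hii] at hmemW
      obtain ⟨z, ⟨w₁, rfl⟩, hzz⟩ := hmemW
      have hw1 : (f.restrict h) w₁ = ⟨(w₀ : V), hw₀⟩ := Subtype.ext hzz
      have hregw := LinearMap.congr_fun hreg w₁
      simp only [LinearMap.comp_apply] at hregw
      rw [hw1] at hregw
      exact congrArg Subtype.val hregw
    rw [heval, hz, add_zero, map_add, hmid, hfst, hfx_eq]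
  have huuW : ∀ x ∈ W, uu x ∈ W := by
    intro x hx
    have he := huu_eval x 0 0 hx C.zero_mem D.zero_mem
    simp only [add_zero] at he
    rw [he]
    have h1 : (⟨0, C.zero_mem⟩ : C) = 0 := rfl
    have h2 : (⟨0, D.zero_mem⟩ : D) = 0 := rfl
    rw [h1, h2, map_zero, map_zero, map_zero]
    simpa using (u₀ ⟨x, hx⟩).2
  have hvvW : ∀ x ∈ W, vv x ∈ W := by
    intro x hx
    have he := hvv_eval x 0 0 hx GC.zero_mem D2.zero_mem
    simp only [add_zero] at he
    rw [he]
    have h1 : (⟨0, D2.zero_mem⟩ : D2) = 0 := rfl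
    rw [h1, map_zero, map_zero]
    simpa using (v₀ ⟨x, hx⟩).2
  have huu_restrict : uu.restrict huuW = u₀ := by
    ext x
    have he := huu_eval (x : V) 0 0 x.2 C.zero_mem D.zero_mem
    simp only [add_zero] at he
    have h1 : (⟨0, C.zero_mem⟩ : C) = 0 := rfl
    have h2 : (⟨0, D.zero_mem⟩ : D) = 0 := rfl
    rw [h1, h2, map_zero, map_zero, map_zero] at he
    have : (uu.restrict huuW x : V) = uu (x : V) := rfl
    rw [this, he]
    simp
  have hvv_restrict : vv.restrict hvvW = v₀ := by
    ext x
    have he := hvv_eval (x : V) 0 0 x.2 GC.zero_mem D2.zero_mem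
    simp only [add_zero] at he
    have h1 : (⟨0, D2.zero_mem⟩ : D2) = 0 := rfl
    rw [h1, map_zero, map_zero] at he
    have : (vv.restrict hvvW x : V) = vv (x : V) := rfl
    rw [this, he]
    simp
  refine ⟨uu, ⟨⟨huuW, by rw [huu_restrict]; exact hu₀S⟩,
    vv, ⟨hvvW, by rw [hvv_restrict]; exact hv₀S⟩, ?_, ?_⟩, ?_⟩
  · ext x; exact huv x
  · ext x; exact hvu x
  · ext x; exact hfuf x
end Bwd

theorem stmt13 {K V : Type*} [Field K] [AddCommGroup V] [Module K V]
    (W : Submodule K V) (S : Set (W →ₗ[K] W)) (hS : LIsSubsemigroup S)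
    (hid : LinearMap.id ∈ S)
    (f : V →ₗ[K] V) (h : ∀ x ∈ W, f x ∈ W) (hf : f.restrict h ∈ S) :
    LUnitRegularElem (LSemi W S) f ↔
      (LUnitRegularElem S (f.restrict h) ∧
       LinearMap.range f ⊓ W = (LinearMap.range (f.restrict h)).map W.subtype ∧
       ∃ T : Submodule K V,
         (∀ v : V, ∃! u, u ∈ T ∧ f u = f v) ∧
         (∀ w ∈ W, ∃! u, u ∈ T ⊓ W ∧ f u = f w) ∧
         Module.rank K (V ⧸ (W ⊔ T)) =
           Module.rank K (V ⧸ (W ⊔ LinearMap.range f))) := by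
  constructor
  · rintro ⟨u, ⟨⟨hu, huS⟩, v, ⟨hv, hvS⟩, huv, hvu⟩, hfuf⟩
    exact fwd W S f h hf u hu huS v hv hvS huv hvu hfuf
  · rintro ⟨⟨u₀, ⟨hu₀S, v₀, hv₀S, huv₀, hvu₀⟩, hreg⟩, hii, T, hT1, hT2, hrank⟩
    exact bwd W S f h u₀ hu₀S v₀ hv₀S huv₀ hvu₀ hreg hii T hT1 hT2 hrank
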